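/- arXiv:2408.07976 — 4 statements merged into one kernel-verified Lean document; each statement's English description precedes it below -/
import Mathlib

section
/- In the long-range percolation model with parameter β > 0 and coupling constants J, suppose there exist a real p > 1 and a constant J̄_p ≥ 0 such that ∑_{w ∈ V \ {u}} J(u, w)^{1/p} ≤ J̄_p for every u ∈ V (uniform p-summability). Then for every vertex v ∈ V and every integer n ≥ 1, setting v₀ := v, the sum over all n-tuples (v₁, …, v_n) of pairwise distinct vertices of V \ {v} of the quantity ℙ(⋂_{i=1}^n A_{v_{i−1}, v_i})^{1/p} is at most (β^{1/p} J̄_p)^n. -/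
open MeasureTheory ProbabilityTheory

open scoped ENNReal

/-- Sums of products of edge weights over walks with distinct consecutive vertices
are bounded by `C ^ n` if each row sum is at most `C`. -/
lemma walk_sum_le {V : Type*} (f : V → V → ℝ≥0∞) (C : ℝ≥0∞)
    (hf : ∀ u : V, ∑' w : {x : V // x ≠ u}, f u (w : V) ≤ C) :
    ∀ (n : ℕ) (v : V),
      ∑' g : {g : Fin (n + 1) → V // (∀ i : Fin n, g i.castSucc ≠ g i.succ) ∧ g 0 = v},
        ∏ i : Fin n, f (g.1 i.castSucc) (g.1 i.succ) ≤ C ^ n := by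
  intro n
  induction n with
  | zero =>
    intro v
    have h1 : ∑' g : {g : Fin 1 → V // (∀ i : Fin 0, g i.castSucc ≠ g i.succ) ∧ g 0 = v},
        ∏ i : Fin 0, f (g.1 i.castSucc) (g.1 i.succ) = 1 := by
      rw [tsum_eq_single (⟨fun _ => v, fun i => i.elim0, rfl⟩ :
          {g : Fin 1 → V // (∀ i : Fin 0, g i.castSucc ≠ g i.succ) ∧ g 0 = v})]
      · simp
      · intro b hb
        exact absurd (Subtype.ext (funext fun i => by
          have hi : i = 0 := Subsingleton.elim _ _
          rw [hi, b.2.2])) hb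
    rw [pow_zero, h1]
  | succ n ih =>
    intro v
    set S := (Σ w : {x : V // x ≠ v}, {g : Fin (n + 1) → V //
        (∀ i : Fin n, g i.castSucc ≠ g i.succ) ∧ g 0 = (w : V)}) with hS
    set G : S → ℝ≥0∞ := fun s =>
      f v (s.1 : V) * ∏ i : Fin n, f (s.2.1 i.castSucc) (s.2.1 i.succ) with hG
    set T := {g : Fin (n + 1 + 1) → V //
        (∀ i : Fin (n + 1), g i.castSucc ≠ g i.succ) ∧ g 0 = v} with hT
    have h01 : ∀ g : T, g.1 1 ≠ v := by
      intro g h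
      have h0 := g.2.1 0
      simp only [Fin.castSucc_zero, Fin.succ_zero_eq_one] at h0
      exact h0 (g.2.2.trans h.symm)
    set inj : T → S := fun g =>
      ⟨⟨g.1 1, h01 g⟩, ⟨Fin.tail g.1, ⟨fun i => by
        have := g.2.1 i.succ
        simpa [Fin.tail] using this, rfl⟩⟩⟩ with hinjdef
    have hinj : Function.Injective inj := by
      intro a b hab
      have h1 : Fin.tail a.1 = Fin.tail b.1 := congrArg (fun s : S => s.2.1) hab
      apply Subtype.ext
      have ha := Fin.cons_self_tail a.1
      have hb := Fin.cons_self_tail b.1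
      rw [a.2.2] at ha
      rw [b.2.2] at hb
      calc a.1 = Fin.cons v (Fin.tail a.1) := ha.symm
        _ = Fin.cons v (Fin.tail b.1) := by rw [h1]
        _ = b.1 := hb
    have key : ∀ g : T,
        (∏ i : Fin (n + 1), f (g.1 i.castSucc) (g.1 i.succ)) = G (inj g) := by
      intro g
      rw [Fin.prod_univ_succ]
      simp [hG, hinjdef, Fin.tail, g.2.2]
    calc ∑' g : T, ∏ i : Fin (n + 1), f (g.1 i.castSucc) (g.1 i.succ)
        = ∑' g : T, G (inj g) := tsum_congr key
      _ ≤ ∑' s : S, G s := ENNReal.tsum_comp_le_tsum_of_injective hinj G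
      _ = ∑' (w : {x : V // x ≠ v}) (g : {g : Fin (n + 1) → V //
            (∀ i : Fin n, g i.castSucc ≠ g i.succ) ∧ g 0 = (w : V)}),
            f v (w : V) * ∏ i : Fin n, f (g.1 i.castSucc) (g.1 i.succ) :=
          ENNReal.tsum_sigma' G
      _ = ∑' w : {x : V // x ≠ v}, f v (w : V) * ∑' g : {g : Fin (n + 1) → V //
            (∀ i : Fin n, g i.castSucc ≠ g i.succ) ∧ g 0 = (w : V)},
            ∏ i : Fin n, f (g.1 i.castSucc) (g.1 i.succ) := by
          exact tsum_congr fun w => ENNReal.tsum_mul_left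
      _ ≤ ∑' w : {x : V // x ≠ v}, f v (w : V) * C ^ n :=
          ENNReal.tsum_le_tsum fun w => mul_le_mul_right (ih (w : V)) _
      _ = (∑' w : {x : V // x ≠ v}, f v (w : V)) * C ^ n := ENNReal.tsum_mul_right
      _ ≤ C * C ^ n := mul_le_mul_left (hf v) _
      _ = C ^ (n + 1) := (pow_succ' C n).symm

theorem stmt6 {Ω : Type*} [MeasurableSpace Ω] (P : Measure Ω) [IsProbabilityMeasure P]
    {V : Type*} [Countable V]
    (J : V → V → ℝ) (hJnn : ∀ u w, 0 ≤ J u w) (hJsymm : ∀ u w, J u w = J w u)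
    (β : ℝ) (hβ : 0 < β)
    (A : V → V → Set Ω) (hAmeas : ∀ u w, MeasurableSet (A u w))
    (hAsymm : ∀ u w, A u w = A w u)
    -- the edge events, indexed by unordered pairs of distinct vertices, are mutually independent
    (hind : iIndepSet (fun p : {q : Sym2 V // ¬ q.IsDiag} => Sym2.lift ⟨A, hAsymm⟩ p.1) P)
    -- the edge `{u,w}` is present with probability `1 - e^{-β J(u,w)}`
    (hprob : ∀ u w : V, u ≠ w → P (A u w) = ENNReal.ofReal (1 - Real.exp (-β * J u w)))
    -- uniform p-summability of the coupling constants
    (p : ℝ) (hp : 1 < p) (Jbp : ℝ) (hJbp : 0 ≤ Jbp)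
    (hsum : ∀ u : V,
      ∑' w : {x : V // x ≠ u}, ENNReal.ofReal (J u (w : V) ^ (1 / p)) ≤ ENNReal.ofReal Jbp)
    (v : V) (n : ℕ) (hn : 1 ≤ n) :
    -- sum over tuples `v = v₀, v₁, …, v_n` of pairwise distinct vertices of
    -- P(v₀ ∼ v₁ ∼ ⋯ ∼ v_n is a SAW)^{1/p} is at most (β^{1/p} J̄_p)^n
    ∑' γ : {g : Fin (n + 1) → V // Function.Injective g ∧ g 0 = v},
      (P (⋂ i : Fin n, A (γ.1 i.castSucc) (γ.1 i.succ))) ^ (1 / p)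
      ≤ ENNReal.ofReal (β ^ (1 / p) * Jbp) ^ n := by
  classical
  have hpinv : (0:ℝ) ≤ 1 / p := by positivity
  set f : V → V → ℝ≥0∞ := fun u w =>
    ENNReal.ofReal (β ^ (1 / p)) * ENNReal.ofReal (J u w ^ (1 / p)) with hfdef
  set C : ℝ≥0∞ := ENNReal.ofReal (β ^ (1 / p) * Jbp) with hCdef
  -- row sums of `f` are bounded by `C`
  have hf : ∀ u : V, ∑' w : {x : V // x ≠ u}, f u (w : V) ≤ C := by
    intro u
    calc ∑' w : {x : V // x ≠ u}, f u (w : V)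
        = ENNReal.ofReal (β ^ (1 / p)) *
            ∑' w : {x : V // x ≠ u}, ENNReal.ofReal (J u (w : V) ^ (1 / p)) :=
          ENNReal.tsum_mul_left
      _ ≤ ENNReal.ofReal (β ^ (1 / p)) * ENNReal.ofReal Jbp :=
          mul_le_mul_right (hsum u) _
      _ = C := by rw [hCdef, ENNReal.ofReal_mul (by positivity)]
  -- each term of the sum is bounded by the corresponding product of `f`s
  have hterm : ∀ γ : {g : Fin (n + 1) → V // Function.Injective g ∧ g 0 = v},
      (P (⋂ i : Fin n, A (γ.1 i.castSucc) (γ.1 i.succ))) ^ (1 / p)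
        ≤ ∏ i : Fin n, f (γ.1 i.castSucc) (γ.1 i.succ) := by
    intro γ
    -- the edges as elements of the index type
    have hne : ∀ i : Fin n, γ.1 i.castSucc ≠ γ.1 i.succ := by
      intro i h
      exact absurd (γ.2.1 h) (Fin.castSucc_lt_succ (i := i)).ne
    set e : Fin n → {q : Sym2 V // ¬ q.IsDiag} := fun i =>
      ⟨s(γ.1 i.castSucc, γ.1 i.succ), by
        rw [Sym2.isDiag_iff_proj_eq]; exact hne i⟩ with hedef
    have he : Function.Injective e := by
      intro i j hij
      have h2 : s(γ.1 i.castSucc, γ.1 i.succ) = s(γ.1 j.castSucc, γ.1 j.succ) :=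
        congrArg Subtype.val hij
      rw [Sym2.eq_iff] at h2
      rcases h2 with ⟨h3, h4⟩ | ⟨h3, h4⟩
      · have h5 : i.castSucc = j.castSucc := γ.2.1 h3
        exact Fin.castSucc_injective _ h5
      · have h5 : i.castSucc = j.succ := γ.2.1 h3
        have h6 : i.succ = j.castSucc := γ.2.1 h4
        have h7 : (i : ℕ) = (j : ℕ) + 1 := by
          simpa using congrArg Fin.val h5
        have h8 : (i : ℕ) + 1 = (j : ℕ) := by
          simpa using congrArg Fin.val h6
        omega
    have hlift : ∀ i : Fin n,
        Sym2.lift ⟨A, hAsymm⟩ (e i).1 = A (γ.1 i.castSucc) (γ.1 i.succ) := fun i => rfl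
    -- independence gives the product formula
    have hPeq : P (⋂ i : Fin n, A (γ.1 i.castSucc) (γ.1 i.succ))
        = ∏ i : Fin n, P (A (γ.1 i.castSucc) (γ.1 i.succ)) := by
      have h1 := hind.meas_biInter (Finset.univ.image e)
      have h2 : (⋂ q ∈ Finset.univ.image e, Sym2.lift ⟨A, hAsymm⟩ q.1)
          = ⋂ i : Fin n, A (γ.1 i.castSucc) (γ.1 i.succ) := by
        ext ω
        simp only [Set.mem_iInter, Finset.mem_image, Finset.mem_univ, true_and]
        constructor
        · intro h i
          have := h (e i) ⟨i, rfl⟩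
          rwa [hlift i] at this
        · rintro h q ⟨i, rfl⟩
          rw [hlift i]; exact h i
      rw [h2] at h1
      rw [h1, Finset.prod_image (fun i _ j _ h => he h)]
      exact Finset.prod_congr rfl fun i _ => by rw [hlift i]
    rw [hPeq]
    have hprod : (∏ i : Fin n, P (A (γ.1 i.castSucc) (γ.1 i.succ))) ^ (1 / p)
        = ∏ i : Fin n, (P (A (γ.1 i.castSucc) (γ.1 i.succ))) ^ (1 / p) :=
      (ENNReal.prod_rpow_of_nonneg hpinv).symm
    rw [hprod]
    apply Finset.prod_le_prod' _
    intro i _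
    set u := γ.1 i.castSucc
    set w := γ.1 i.succ
    have hPle : P (A u w) ≤ ENNReal.ofReal (β * J u w) := by
      rw [hprob u w (hne i)]
      apply ENNReal.ofReal_le_ofReal
      have := Real.add_one_le_exp (-(β * J u w))
      have h9 : -β * J u w = -(β * J u w) := by ring
      rw [h9]
      linarith
    calc (P (A u w)) ^ (1 / p) ≤ (ENNReal.ofReal (β * J u w)) ^ (1 / p) :=
        ENNReal.rpow_le_rpow hPle hpinv
      _ = ENNReal.ofReal ((β * J u w) ^ (1 / p)) :=
        ENNReal.ofReal_rpow_of_nonneg (mul_nonneg hβ.le (hJnn u w)) hpinv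
      _ = ENNReal.ofReal (β ^ (1 / p) * J u w ^ (1 / p)) := by
        rw [Real.mul_rpow hβ.le (hJnn u w)]
      _ = f u w := by
        simp only [hfdef]
        rw [← ENNReal.ofReal_mul (by positivity)]
  -- compare with the sum over walks with distinct consecutive vertices
  set ι : {g : Fin (n + 1) → V // Function.Injective g ∧ g 0 = v} →
      {g : Fin (n + 1) → V // (∀ i : Fin n, g i.castSucc ≠ g i.succ) ∧ g 0 = v} :=
    fun γ => ⟨γ.1, ⟨fun i h => absurd (γ.2.1 h) (Fin.castSucc_lt_succ (i := i)).ne, γ.2.2⟩⟩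
    with hι
  have hιinj : Function.Injective ι := by
    intro a b hab
    rw [Subtype.ext_iff] at hab ⊢
    exact hab
  calc ∑' γ : {g : Fin (n + 1) → V // Function.Injective g ∧ g 0 = v},
      (P (⋂ i : Fin n, A (γ.1 i.castSucc) (γ.1 i.succ))) ^ (1 / p)
      ≤ ∑' γ : {g : Fin (n + 1) → V // Function.Injective g ∧ g 0 = v},
          ∏ i : Fin n, f (γ.1 i.castSucc) (γ.1 i.succ) :=
        ENNReal.tsum_le_tsum hterm
    _ = ∑' γ : {g : Fin (n + 1) → V // Function.Injective g ∧ g 0 = v},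
          (fun g : {g : Fin (n + 1) → V //
              (∀ i : Fin n, g i.castSucc ≠ g i.succ) ∧ g 0 = v} =>
            ∏ i : Fin n, f (g.1 i.castSucc) (g.1 i.succ)) (ι γ) := rfl
    _ ≤ ∑' g : {g : Fin (n + 1) → V //
          (∀ i : Fin n, g i.castSucc ≠ g i.succ) ∧ g 0 = v},
          ∏ i : Fin n, f (g.1 i.castSucc) (g.1 i.succ) :=
        ENNReal.tsum_comp_le_tsum_of_injective hιinj _
    _ ≤ C ^ n := walk_sum_le f C hf n v
end

section
/- In the geometric random graph model with parameters s, S̄, K, for every vertex v ∈ V and every integer n ≥ 1, E[deg(v)^n] ≤ (K^{2s} S̄)^n, where the expectation is the Lebesgue integral with values in [0, ∞]. -/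
open MeasureTheory ProbabilityTheory ENNReal






lemma pair_ineq' (x y : ℝ≥0∞) (n : ℕ) :
    x ^ n * y + y ^ n * x ≤ x ^ (n + 1) + y ^ (n + 1) := by
  rcases eq_or_ne x ⊤ with hx | hx
  · simp [hx, ENNReal.top_pow n.succ_ne_zero]
  rcases eq_or_ne y ⊤ with hy | hy
  · simp [hy, ENNReal.top_pow n.succ_ne_zero]
  lift x to NNReal using hx
  lift y to NNReal using hy
  rw [← ENNReal.coe_pow, ← ENNReal.coe_pow, ← ENNReal.coe_pow, ← ENNReal.coe_pow,
    ← ENNReal.coe_mul, ← ENNReal.coe_mul, ← ENNReal.coe_add, ← ENNReal.coe_add,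
    ENNReal.coe_le_coe, ← NNReal.coe_le_coe]
  push_cast
  rw [pow_succ, pow_succ]
  rcases le_total (x : ℝ) (y : ℝ) with h | h
  · have hxn : (x : ℝ) ^ n ≤ (y : ℝ) ^ n := pow_le_pow_left₀ x.coe_nonneg h n
    nlinarith [mul_nonneg (sub_nonneg.2 hxn) (sub_nonneg.2 h)]
  · have hxn : (y : ℝ) ^ n ≤ (x : ℝ) ^ n := pow_le_pow_left₀ y.coe_nonneg h n
    nlinarith [mul_nonneg (sub_nonneg.2 hxn) (sub_nonneg.2 h)]

lemma cheb' {ι : Type*} (a Y : ι → ℝ≥0∞) (n : ℕ) :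
    (∑' i, a i * Y i ^ n) * (∑' i, a i * Y i) ≤ (∑' i, a i) * (∑' i, a i * Y i ^ (n + 1)) := by
  have hF : (∑' i, a i * Y i ^ n) * (∑' i, a i * Y i)
      = ∑' i, ∑' j, (a i * Y i ^ n) * (a j * Y j) := by
    rw [← ENNReal.tsum_mul_right]
    exact tsum_congr fun i => (ENNReal.tsum_mul_left).symm
  have hG : (∑' i, a i) * (∑' i, a i * Y i ^ (n + 1))
      = ∑' i, ∑' j, a i * (a j * Y j ^ (n + 1)) := by
    rw [← ENNReal.tsum_mul_right]
    exact tsum_congr fun i => (ENNReal.tsum_mul_left).symm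
  set F : ι → ι → ℝ≥0∞ := fun i j => (a i * Y i ^ n) * (a j * Y j) with hFdef
  set G : ι → ι → ℝ≥0∞ := fun i j => a i * (a j * Y j ^ (n + 1)) with hGdef
  rw [hF, hG]
  have hswapF : ∑' i, ∑' j, F i j = ∑' i, ∑' j, F j i := ENNReal.tsum_comm
  have hswapG : ∑' i, ∑' j, G i j = ∑' i, ∑' j, G j i := ENNReal.tsum_comm
  have key : ∑' i, ∑' j, (F i j + F j i) ≤ ∑' i, ∑' j, (G i j + G j i) := by
    refine ENNReal.tsum_le_tsum fun i => ENNReal.tsum_le_tsum fun j => ?_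
    have h := pair_ineq' (Y i) (Y j) n
    calc F i j + F j i = (a i * a j) * (Y i ^ n * Y j + Y j ^ n * Y i) := by
          simp only [hFdef]; ring
      _ ≤ (a i * a j) * (Y i ^ (n + 1) + Y j ^ (n + 1)) := mul_le_mul_right h _
      _ = G i j + G j i := by simp only [hGdef]; ring
  have h2F : ∑' i, ∑' j, (F i j + F j i) = 2 * ∑' i, ∑' j, F i j := by
    simp only [ENNReal.tsum_add]
    rw [← hswapF, two_mul]
  have h2G : ∑' i, ∑' j, (G i j + G j i) = 2 * ∑' i, ∑' j, G i j := by
    simp only [ENNReal.tsum_add]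
    rw [← hswapG, two_mul]
  rw [h2F, h2G] at key
  exact (ENNReal.mul_le_mul_iff_right (by norm_num) (by norm_num)).mp key

lemma tsum_pow_le' {ι : Type*} (a Y : ι → ℝ≥0∞) :
    ∀ n : ℕ, 1 ≤ n →
      (∑' i, a i * Y i) ^ n ≤ (∑' i, a i) ^ (n - 1) * ∑' i, a i * Y i ^ n := by
  intro n hn
  induction n, hn using Nat.le_induction with
  | base => simp
  | succ n hn ih =>
    calc (∑' i, a i * Y i) ^ (n + 1) = (∑' i, a i * Y i) ^ n * (∑' i, a i * Y i) := pow_succ _ _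
      _ ≤ ((∑' i, a i) ^ (n - 1) * ∑' i, a i * Y i ^ n) * (∑' i, a i * Y i) :=
          mul_le_mul_left ih _
      _ = (∑' i, a i) ^ (n - 1) * ((∑' i, a i * Y i ^ n) * (∑' i, a i * Y i)) := by ring
      _ ≤ (∑' i, a i) ^ (n - 1) * ((∑' i, a i) * (∑' i, a i * Y i ^ (n + 1))) :=
          mul_le_mul_right (cheb' a Y n) _
      _ = ((∑' i, a i) ^ (n - 1) * (∑' i, a i)) * (∑' i, a i * Y i ^ (n + 1)) := by ring
      _ = (∑' i, a i) ^ (n + 1 - 1) * (∑' i, a i * Y i ^ (n + 1)) := by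
          rw [← pow_succ, Nat.sub_add_cancel hn]
          simp

theorem stmt7 {Ω : Type*} [MeasurableSpace Ω] (P : Measure Ω) [IsProbabilityMeasure P]
    {M : Type*} [MetricSpace M] (V : Set M) (hVc : V.Countable)
    -- the point set is well-spaced: ∑_{w ≠ v} δ(v,w)^{-s} ≤ S̄ for every v
    (s : ℕ) (hs : 1 < s) (Sb : ℝ) (hSb : 0 < Sb)
    (hsum : ∀ v : V, ∑' w : {x : V // x ≠ v},
      ENNReal.ofReal (dist (v : M) (w.1 : M)) ^ (-(s : ℝ)) ≤ ENNReal.ofReal Sb)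
    -- i.i.d. nonnegative grain radii with E[Z^n] ≤ K^n
    (R : V → Ω → ℝ) (hRmeas : ∀ v, Measurable (R v)) (hRnn : ∀ v ω, 0 ≤ R v ω)
    (hRind : iIndepFun R P)
    (hRid : ∀ v w : V, Measure.map (R v) P = Measure.map (R w) P)
    (K : ℝ) (hK : 1 < K)
    (hmom : ∀ (v : V) (m : ℕ), 1 ≤ m →
      ∫⁻ ω, ENNReal.ofReal (R v ω) ^ m ∂P ≤ ENNReal.ofReal K ^ m)
    (v : V) (n : ℕ) (hn : 1 ≤ n) :
    -- E[deg(v)^n] ≤ (K^{2s} S̄)^n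
    ∫⁻ ω, (∑' w : {x : V // x ≠ v},
        Set.indicator {ω' | dist (v : M) (w.1 : M) < min (R v ω') (R w.1 ω')}
          (fun _ => (1 : ℝ≥0∞)) ω) ^ n ∂P
      ≤ ENNReal.ofReal (K ^ (2 * s) * Sb) ^ n := by
  haveI := hVc.to_subtype
  set a : {x : V // x ≠ v} → ℝ≥0∞ :=
    fun w => ENNReal.ofReal (dist (v : M) (w.1 : M)) ^ (-(s : ℝ)) with ha
  set Y : {x : V // x ≠ v} → Ω → ℝ≥0∞ :=
    fun w ω => ENNReal.ofReal (R w.1 ω) ^ s with hY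
  have hdpos : ∀ w : {x : V // x ≠ v}, 0 < dist (v : M) (w.1 : M) := by
    intro w
    exact dist_pos.2 (fun h => w.2 (Subtype.coe_injective h.symm))
  have haw : ∀ w, a w = (ENNReal.ofReal (dist (v : M) (w.1 : M)) ^ s)⁻¹ := by
    intro w
    rw [ha]
    rw [← ENNReal.rpow_natCast (ENNReal.ofReal (dist (v : M) (w.1 : M))) s,
      ← ENNReal.rpow_neg]
  have hatop : ∀ w, a w ≠ ⊤ := by
    intro w
    rw [haw]
    simp [ENNReal.pow_eq_top_iff, (ENNReal.ofReal_pos.2 (hdpos w)).ne']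
  -- Step 1: pointwise domination of the degree
  have hpt : ∀ ω, (∑' w : {x : V // x ≠ v},
      Set.indicator {ω' | dist (v : M) (w.1 : M) < min (R v ω') (R w.1 ω')}
        (fun _ => (1 : ℝ≥0∞)) ω) ≤ ∑' w, a w * Y w ω := by
    intro ω
    refine ENNReal.tsum_le_tsum fun w => ?_
    by_cases h : ω ∈ {ω' | dist (v : M) (w.1 : M) < min (R v ω') (R w.1 ω')}
    · rw [Set.indicator_of_mem h]
      have hdR : dist (v : M) (w.1 : M) < R w.1 ω :=
        lt_of_lt_of_le h (min_le_right _ _)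
      have hd0 : ENNReal.ofReal (dist (v : M) (w.1 : M)) ^ s ≠ 0 :=
        pow_ne_zero _ (ENNReal.ofReal_pos.2 (hdpos w)).ne'
      have hdt : ENNReal.ofReal (dist (v : M) (w.1 : M)) ^ s ≠ ⊤ :=
        ENNReal.pow_ne_top ENNReal.ofReal_ne_top
      have h2 : ENNReal.ofReal (dist (v : M) (w.1 : M)) ^ s ≤ Y w ω := by
        rw [hY]
        exact pow_le_pow_left' (ENNReal.ofReal_le_ofReal hdR.le) s
      calc (1 : ℝ≥0∞) = (ENNReal.ofReal (dist (v : M) (w.1 : M)) ^ s)⁻¹ *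
            (ENNReal.ofReal (dist (v : M) (w.1 : M)) ^ s) :=
            (ENNReal.inv_mul_cancel hd0 hdt).symm
        _ ≤ a w * Y w ω := by rw [haw]; exact mul_le_mul_right h2 _
    · rw [Set.indicator_of_notMem h]; exact zero_le
  have hsum_a : ∑' w, a w ≤ ENNReal.ofReal Sb := hsum v
  have hYn : ∀ w : {x : V // x ≠ v},
      ∫⁻ ω, Y w ω ^ n ∂P ≤ ENNReal.ofReal K ^ (s * n) := by
    intro w
    have : ∀ ω, Y w ω ^ n = ENNReal.ofReal (R w.1 ω) ^ (s * n) := by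
      intro ω; rw [hY, ← pow_mul]
    simp only [this]
    exact hmom w.1 (s * n) (Nat.one_le_iff_ne_zero.2 (by positivity))
  have hameas : ∀ w : {x : V // x ≠ v},
      AEMeasurable (fun ω => a w * Y w ω ^ n) P := by
    intro w
    exact ((((hRmeas w.1).ennreal_ofReal.pow_const s).pow_const n).const_mul _).aemeasurable
  calc ∫⁻ ω, (∑' w : {x : V // x ≠ v},
        Set.indicator {ω' | dist (v : M) (w.1 : M) < min (R v ω') (R w.1 ω')}
          (fun _ => (1 : ℝ≥0∞)) ω) ^ n ∂P
      ≤ ∫⁻ ω, (∑' w, a w * Y w ω) ^ n ∂P :=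
        lintegral_mono fun ω => pow_le_pow_left' (hpt ω) n
    _ ≤ ∫⁻ ω, ENNReal.ofReal Sb ^ (n - 1) * ∑' w, a w * Y w ω ^ n ∂P := by
        refine lintegral_mono fun ω => ?_
        refine (tsum_pow_le' a (fun w => Y w ω) n hn).trans ?_
        exact mul_le_mul_left (pow_le_pow_left' hsum_a _) _
    _ = ENNReal.ofReal Sb ^ (n - 1) * ∑' w, ∫⁻ ω, a w * Y w ω ^ n ∂P := by
        rw [lintegral_const_mul' _ _ (ENNReal.pow_ne_top ENNReal.ofReal_ne_top),
          lintegral_tsum hameas]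
    _ ≤ ENNReal.ofReal Sb ^ (n - 1) * ∑' w, a w * ENNReal.ofReal K ^ (s * n) := by
        refine mul_le_mul_right (ENNReal.tsum_le_tsum fun w => ?_) _
        rw [lintegral_const_mul' _ _ (hatop w)]
        exact mul_le_mul_right (hYn w) _
    _ = ENNReal.ofReal Sb ^ (n - 1) * ((∑' w, a w) * ENNReal.ofReal K ^ (s * n)) := by
        rw [ENNReal.tsum_mul_right]
    _ ≤ ENNReal.ofReal Sb ^ (n - 1) * (ENNReal.ofReal Sb * ENNReal.ofReal K ^ (s * n)) :=
        mul_le_mul_right (mul_le_mul_left hsum_a _) _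
    _ = ENNReal.ofReal Sb ^ n * ENNReal.ofReal K ^ (s * n) := by
        rw [← mul_assoc, ← pow_succ, Nat.sub_add_cancel hn]
    _ ≤ ENNReal.ofReal Sb ^ n * ENNReal.ofReal K ^ (2 * s * n) := by
        refine mul_le_mul_right (pow_le_pow_right₀ ?_ ?_) _
        · exact ENNReal.one_le_ofReal.2 hK.le
        · nlinarith
    _ = ENNReal.ofReal (K ^ (2 * s) * Sb) ^ n := by
        rw [ENNReal.ofReal_mul (by positivity), ENNReal.ofReal_pow (by positivity),
          mul_pow, ← pow_mul, mul_comm]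
end

section
/- In the geometric random graph model with parameters s, S̄, K, let p > 1 be a real number. Then for every vertex v ∈ V and every integer n ≥ 1, setting v₀ := v, the sum over all n-tuples (v₁, …, v_n) of pairwise distinct vertices of V \ {v} of the quantity ℙ(⋂_{i=1}^n {δ(v_{i−1}, v_i) < min(R_{v_{i−1}}, R_{v_i})})^{1/p} is at most K^{⌈sp⌉/p} · (S̄ · K^{⌈sp⌉/p})^n. -/
open MeasureTheory ProbabilityTheory
open scoped ENNReal NNReal

/-- Summing a product of kernel weights over all paths from a fixed start. -/
lemma aux_path_sum {α : Type*} (f : α → α → ℝ≥0∞) (C : ℝ≥0∞)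
    (hf : ∀ u, ∑' w, f u w ≤ C) (v : α) :
    ∀ N : ℕ, ∑' g : {g : Fin (N + 1) → α // g 0 = v},
      ∏ i : Fin N, f (g.1 i.castSucc) (g.1 i.succ) ≤ C ^ N := by
  intro N
  induction N with
  | zero =>
    haveI : Unique {g : Fin 1 → α // g 0 = v} :=
      { default := ⟨fun _ => v, rfl⟩
        uniq := by
          rintro ⟨g, hg⟩
          apply Subtype.ext
          funext i
          have hi : i = 0 := Subsingleton.elim _ _
          simp [hi, hg] }
    rw [tsum_eq_single default fun b hb => absurd (Subsingleton.elim b default) hb]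
    simp
  | succ N ih =>
    let e : {g : Fin (N + 2) → α // g 0 = v} ≃ {h : Fin (N + 1) → α // h 0 = v} × α :=
      { toFun := fun g => (⟨Fin.init g.1, g.2⟩, g.1 (Fin.last (N + 1)))
        invFun := fun q => ⟨Fin.snoc q.1.1 q.2, by
          have h0 : (Fin.snoc q.1.1 q.2 : Fin (N + 2) → α) (Fin.castSucc 0) = q.1.1 0 :=
            Fin.snoc_castSucc ..
          exact h0.trans q.1.2⟩
        left_inv := fun g => Subtype.ext (Fin.snoc_init_self g.1)
        right_inv := fun q => by
          refine Prod.ext (Subtype.ext ?_) ?_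
          · funext i
            simp [Fin.init]
          · simp }
    have hsplit : ∀ (h : Fin (N + 1) → α) (w : α),
        (∏ i : Fin (N + 1), f ((Fin.snoc h w : Fin (N + 2) → α) i.castSucc)
            ((Fin.snoc h w : Fin (N + 2) → α) i.succ))
          = (∏ i : Fin N, f (h i.castSucc) (h i.succ)) * f (h (Fin.last N)) w := by
      intro h w
      rw [Fin.prod_univ_castSucc]
      congr 1
      · refine Finset.prod_congr rfl fun i _ => ?_
        rw [Fin.succ_castSucc, Fin.snoc_castSucc, Fin.snoc_castSucc]
      · rw [Fin.succ_last, Fin.snoc_castSucc, Fin.snoc_last]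
    calc ∑' g : {g : Fin (N + 2) → α // g 0 = v},
          ∏ i : Fin (N + 1), f (g.1 i.castSucc) (g.1 i.succ)
        = ∑' q : {h : Fin (N + 1) → α // h 0 = v} × α,
            ∏ i : Fin (N + 1), f ((e.symm q).1 i.castSucc) ((e.symm q).1 i.succ) :=
          (e.symm.tsum_eq _).symm
      _ = ∑' q : {h : Fin (N + 1) → α // h 0 = v} × α,
            (∏ i : Fin N, f (q.1.1 i.castSucc) (q.1.1 i.succ)) * f (q.1.1 (Fin.last N)) q.2 :=
          tsum_congr fun q => hsplit q.1.1 q.2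
      _ = ∑' (h : {h : Fin (N + 1) → α // h 0 = v}), ∑' (w : α),
            (∏ i : Fin N, f (h.1 i.castSucc) (h.1 i.succ)) * f (h.1 (Fin.last N)) w :=
          ENNReal.tsum_prod'
      _ ≤ ∑' (h : {h : Fin (N + 1) → α // h 0 = v}),
            (∏ i : Fin N, f (h.1 i.castSucc) (h.1 i.succ)) * C := by
          refine ENNReal.tsum_le_tsum fun h => ?_
          rw [ENNReal.tsum_mul_left]
          exact mul_le_mul_right (hf _) _
      _ = (∑' (h : {h : Fin (N + 1) → α // h 0 = v}),
            ∏ i : Fin N, f (h.1 i.castSucc) (h.1 i.succ)) * C := ENNReal.tsum_mul_right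
      _ ≤ C ^ N * C := mul_le_mul_left ih C
      _ = C ^ (N + 1) := (pow_succ C N).symm

/-- Markov-type bound for a single edge probability. -/
lemma aux_markov {Ω : Type*} [MeasurableSpace Ω] (P : Measure Ω) [IsProbabilityMeasure P]
    (X : Ω → ℝ) (hX : Measurable X) (K : ℝ) (hK : 1 < K) (m : ℕ)
    (hmom : ∫⁻ ω, ENNReal.ofReal (X ω) ^ m ∂P ≤ ENNReal.ofReal K ^ m)
    (p : ℝ) (hp : 1 < p) (s : ℕ) (hsp : (s : ℝ) * p ≤ (m : ℝ)) (d : ℝ) (hd : 0 < d) :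
    (P {ω | d < X ω}) ^ (1 / p)
      ≤ ENNReal.ofReal (K ^ ((m : ℝ) / p)) * ENNReal.ofReal d ^ (-(s : ℝ)) := by
  have hp0 : (0 : ℝ) < p := by linarith
  have h1p : (0 : ℝ) ≤ 1 / p := by positivity
  have hK0 : (0 : ℝ) < K := by linarith
  have hKc : (1 : ℝ≥0∞) ≤ ENNReal.ofReal (K ^ ((m : ℝ) / p)) := by
    rw [ENNReal.one_le_ofReal]
    exact Real.one_le_rpow hK.le (by positivity)
  by_cases hd1 : 1 ≤ d
  · -- Markov inequality case
    have hsub : {ω | d < X ω} ⊆ {ω | ENNReal.ofReal d ^ m ≤ ENNReal.ofReal (X ω) ^ m} :=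
      fun ω hω => pow_le_pow_left₀ zero_le (ENNReal.ofReal_le_ofReal (le_of_lt hω)) m
    have hmeas : AEMeasurable (fun ω => ENNReal.ofReal (X ω) ^ m) P :=
      ((hX.ennreal_ofReal).pow_const m).aemeasurable
    have key : ENNReal.ofReal d ^ m * P {ω | d < X ω} ≤ ENNReal.ofReal K ^ m :=
      le_trans (le_trans (mul_le_mul_right (measure_mono hsub) _)
        (mul_meas_ge_le_lintegral₀ hmeas _)) hmom
    have hεne : ENNReal.ofReal d ^ m ≠ 0 :=
      pow_ne_zero m (ENNReal.ofReal_pos.mpr hd).ne'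
    have hεtop : ENNReal.ofReal d ^ m ≠ ⊤ :=
      ENNReal.pow_ne_top ENNReal.ofReal_ne_top
    have hP : P {ω | d < X ω} ≤ ENNReal.ofReal K ^ m / ENNReal.ofReal d ^ m := by
      rw [ENNReal.le_div_iff_mul_le (Or.inl hεne) (Or.inl hεtop), mul_comm]
      exact key
    have hPd : P {ω | d < X ω}
        ≤ ENNReal.ofReal K ^ (m : ℝ) * ENNReal.ofReal d ^ (-(m : ℝ)) := by
      rw [ENNReal.rpow_natCast, ENNReal.rpow_neg, ENNReal.rpow_natCast, ← div_eq_mul_inv]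
      exact hP
    calc (P {ω | d < X ω}) ^ (1 / p)
        ≤ (ENNReal.ofReal K ^ (m : ℝ) * ENNReal.ofReal d ^ (-(m : ℝ))) ^ (1 / p) :=
          ENNReal.rpow_le_rpow hPd h1p
      _ = ENNReal.ofReal K ^ ((m : ℝ) * (1 / p))
            * ENNReal.ofReal d ^ (-(m : ℝ) * (1 / p)) := by
          rw [ENNReal.mul_rpow_of_nonneg _ _ h1p, ← ENNReal.rpow_mul, ← ENNReal.rpow_mul]
      _ ≤ ENNReal.ofReal (K ^ ((m : ℝ) / p)) * ENNReal.ofReal d ^ (-(s : ℝ)) := by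
          refine mul_le_mul' (le_of_eq ?_) ?_
          · rw [ENNReal.ofReal_rpow_of_pos hK0, mul_one_div]
          · refine ENNReal.rpow_le_rpow_of_exponent_le (ENNReal.one_le_ofReal.mpr hd1) ?_
            have hmp : (s : ℝ) ≤ (m : ℝ) / p := (le_div_iff₀ hp0).mpr hsp
            have h' : -(m : ℝ) * (1 / p) = -((m : ℝ) / p) := by ring
            rw [h']
            linarith
  · -- small distance case
    push_neg at hd1
    have h2 : (1 : ℝ≥0∞) ≤ ENNReal.ofReal d ^ (-(s : ℝ)) := by
      rw [ENNReal.rpow_neg, ENNReal.one_le_inv]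
      exact ENNReal.rpow_le_one (ENNReal.ofReal_le_one.mpr hd1.le) (by positivity)
    calc (P {ω | d < X ω}) ^ (1 / p) ≤ (1 : ℝ≥0∞) ^ (1 / p) :=
          ENNReal.rpow_le_rpow prob_le_one h1p
      _ = 1 := ENNReal.one_rpow _
      _ = 1 * 1 := (one_mul 1).symm
      _ ≤ _ := mul_le_mul' hKc h2

theorem stmt8 {Ω : Type*} [MeasurableSpace Ω] (P : Measure Ω) [IsProbabilityMeasure P]
    {M : Type*} [MetricSpace M] (V : Set M) (hVc : V.Countable)
    -- the point set is well-spaced: ∑_{w ≠ v} δ(v,w)^{-s} ≤ S̄ for every v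
    (s : ℕ) (hs : 1 < s) (Sb : ℝ) (hSb : 0 < Sb)
    (hsum : ∀ v : V, ∑' w : {x : V // x ≠ v},
      ENNReal.ofReal (dist (v : M) (w.1 : M)) ^ (-(s : ℝ)) ≤ ENNReal.ofReal Sb)
    -- i.i.d. nonnegative grain radii with E[Z^n] ≤ K^n
    (R : V → Ω → ℝ) (hRmeas : ∀ v, Measurable (R v)) (hRnn : ∀ v ω, 0 ≤ R v ω)
    (hRind : iIndepFun R P)
    (hRid : ∀ v w : V, Measure.map (R v) P = Measure.map (R w) P)
    (K : ℝ) (hK : 1 < K)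
    (hmom : ∀ (v : V) (m : ℕ), 1 ≤ m →
      ∫⁻ ω, ENNReal.ofReal (R v ω) ^ m ∂P ≤ ENNReal.ofReal K ^ m)
    (p : ℝ) (hp : 1 < p)
    (v : V) (n : ℕ) (hn : 1 ≤ n) :
    -- sum over tuples `v = v₀, v₁, …, v_n` of pairwise distinct vertices of
    -- P(v₀ ∼ v₁ ∼ ⋯ ∼ v_n is a SAW)^{1/p} is at most K^{⌈sp⌉/p} (S̄ K^{⌈sp⌉/p})^n
    ∑' γ : {g : Fin (n + 1) → ↥V // Function.Injective g ∧ g 0 = v},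
      (P (⋂ i : Fin n, {ω | dist ((γ.1 i.castSucc : ↥V) : M) ((γ.1 i.succ : ↥V) : M)
          < min (R (γ.1 i.castSucc) ω) (R (γ.1 i.succ) ω)})) ^ (1 / p)
      ≤ ENNReal.ofReal (K ^ ((⌈(s : ℝ) * p⌉ : ℝ) / p)) *
        (ENNReal.ofReal (Sb * K ^ ((⌈(s : ℝ) * p⌉ : ℝ) / p))) ^ n := by
  classical
  have hp0 : (0 : ℝ) < p := by linarith
  have hK0 : (0 : ℝ) < K := by linarith
  have h1p : (0 : ℝ) ≤ 1 / p := by positivity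
  have hsp0 : (0 : ℝ) < (s : ℝ) * p := by
    have : (0 : ℝ) < (s : ℝ) := by exact_mod_cast Nat.zero_lt_of_lt hs
    positivity
  set m : ℕ := ⌈(s : ℝ) * p⌉₊ with hm
  have hm1 : 1 ≤ m := Nat.one_le_ceil_iff.mpr hsp0
  have hsp : (s : ℝ) * p ≤ (m : ℝ) := Nat.le_ceil _
  have hceil : ((⌈(s : ℝ) * p⌉ : ℤ) : ℝ) = (m : ℝ) := by
    rw [← Int.natCast_ceil_eq_ceil hsp0.le]
    push_cast
    rfl
  rw [hceil]
  set c : ℝ := K ^ ((m : ℝ) / p) with hc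
  have hc0 : (0 : ℝ) < c := Real.rpow_pos_of_pos hK0 _
  have hc1 : (1 : ℝ) ≤ c := Real.one_le_rpow hK.le (by positivity)
  have hc1' : (1 : ℝ≥0∞) ≤ ENNReal.ofReal c := ENNReal.one_le_ofReal.mpr hc1
  -- the kernel
  set f : V → V → ℝ≥0∞ := fun u w =>
    if w = u then 0
    else ENNReal.ofReal c * ENNReal.ofReal (dist (u : M) (w : M)) ^ (-(s : ℝ)) with hf
  -- row sums of the kernel
  have hB : ∀ u : V, ∑' w : V, f u w ≤ ENNReal.ofReal (Sb * c) := by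
    intro u
    have hind : (fun w : V => f u w)
        = Set.indicator {x : V | x ≠ u}
            (fun w => ENNReal.ofReal c
              * ENNReal.ofReal (dist (u : M) (w : M)) ^ (-(s : ℝ))) := by
      funext w
      by_cases h : w = u
      · simp [hf, h, Set.indicator]
      · simp [hf, h, Set.indicator]
    rw [hind, ← tsum_subtype, ENNReal.tsum_mul_left]
    calc ENNReal.ofReal c * ∑' w : {x : V | x ≠ u},
          ENNReal.ofReal (dist (u : M) ((w : V) : M)) ^ (-(s : ℝ))
        ≤ ENNReal.ofReal c * ENNReal.ofReal Sb := mul_le_mul_right (hsum u) _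
      _ = ENNReal.ofReal (Sb * c) := by
          rw [← ENNReal.ofReal_mul hc0.le, mul_comm]
  -- bound each walk probability by the product of kernel weights
  have hA : ∀ γ : {g : Fin (n + 1) → ↥V // Function.Injective g ∧ g 0 = v},
      (P (⋂ i : Fin n, {ω | dist ((γ.1 i.castSucc : ↥V) : M) ((γ.1 i.succ : ↥V) : M)
          < min (R (γ.1 i.castSucc) ω) (R (γ.1 i.succ) ω)})) ^ (1 / p)
        ≤ ∏ i : Fin n, f (γ.1 i.castSucc) (γ.1 i.succ) := by
    rintro ⟨g, hginj, hg0⟩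
    set q : Fin n → V := fun i => g i.succ with hq
    have hqinj : Function.Injective q := fun i j h => Fin.succ_injective _ (hginj h)
    set d : Fin n → ℝ := fun i => dist ((g i.castSucc : V) : M) ((g i.succ : V) : M) with hd
    have hdpos : ∀ i, 0 < d i := by
      intro i
      refine dist_pos.mpr fun h => ?_
      exact absurd (hginj (Subtype.ext h)) (Fin.castSucc_lt_succ (i := i)).ne
    set c' : V → ℝ := Function.extend q d (fun _ => 0) with hc'def
    have hc' : ∀ i, c' (q i) = d i := fun i => hqinj.extend_apply d _ i
    -- the intersection of one-sided events factorizes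
    have hint : P (⋂ i : Fin n, R (q i) ⁻¹' Set.Ioi (d i))
        = ∏ i : Fin n, P (R (q i) ⁻¹' Set.Ioi (d i)) := by
      have hmain := hRind.measure_inter_preimage_eq_mul (Finset.image q Finset.univ)
        (sets := fun w => Set.Ioi (c' w)) (fun i _ => measurableSet_Ioi)
      have h1 : (⋂ w ∈ Finset.image q Finset.univ, R w ⁻¹' Set.Ioi (c' w))
          = ⋂ i : Fin n, R (q i) ⁻¹' Set.Ioi (d i) := by
        ext ω
        simp only [Set.mem_iInter, Finset.mem_image, Finset.mem_univ, true_and,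
          Set.mem_preimage, Set.mem_Ioi]
        constructor
        · intro h i
          have := h (q i) ⟨i, rfl⟩
          rwa [hc' i] at this
        · rintro h w ⟨i, rfl⟩
          rw [hc' i]
          exact h i
      have h2 : (∏ w ∈ Finset.image q Finset.univ, P (R w ⁻¹' Set.Ioi (c' w)))
          = ∏ i : Fin n, P (R (q i) ⁻¹' Set.Ioi (d i)) := by
        rw [Finset.prod_image (fun i _ j _ h => hqinj h)]
        exact Finset.prod_congr rfl fun i _ => by rw [hc' i]
      rw [← h1, ← h2]
      exact hmain
    have hsub : (⋂ i : Fin n, {ω | dist ((g i.castSucc : V) : M) ((g i.succ : V) : M)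
          < min (R (g i.castSucc) ω) (R (g i.succ) ω)})
        ⊆ ⋂ i : Fin n, R (q i) ⁻¹' Set.Ioi (d i) := by
      refine Set.iInter_mono fun i => ?_
      intro ω hω
      have hω' : d i < min (R (g i.castSucc) ω) (R (g i.succ) ω) := hω
      exact lt_of_lt_of_le hω' (min_le_right _ _)
    calc (P (⋂ i : Fin n, {ω | dist ((g i.castSucc : V) : M) ((g i.succ : V) : M)
          < min (R (g i.castSucc) ω) (R (g i.succ) ω)})) ^ (1 / p)
        ≤ (P (⋂ i : Fin n, R (q i) ⁻¹' Set.Ioi (d i))) ^ (1 / p) :=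
          ENNReal.rpow_le_rpow (measure_mono hsub) h1p
      _ = (∏ i : Fin n, P (R (q i) ⁻¹' Set.Ioi (d i))) ^ (1 / p) := by rw [hint]
      _ = ∏ i : Fin n, (P (R (q i) ⁻¹' Set.Ioi (d i))) ^ (1 / p) :=
          (ENNReal.prod_rpow_of_nonneg h1p).symm
      _ ≤ ∏ i : Fin n, f (g i.castSucc) (g i.succ) := by
          refine Finset.prod_le_prod' fun i _ => ?_
          have hne : g i.succ ≠ g i.castSucc :=
            fun h => absurd (hginj h) (Fin.castSucc_lt_succ (i := i)).ne'
          have hfval : f (g i.castSucc) (g i.succ)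
              = ENNReal.ofReal c
                * ENNReal.ofReal (dist ((g i.castSucc : V) : M) ((g i.succ : V) : M))
                  ^ (-(s : ℝ)) := by
            rw [hf]
            exact if_neg hne
          rw [hfval, hc]
          have hmar := aux_markov P (R (q i)) (hRmeas _) K hK m (hmom (q i) m hm1)
            p hp s hsp (d i) (hdpos i)
          have hset : {ω | d i < R (q i) ω} = R (q i) ⁻¹' Set.Ioi (d i) := rfl
          rw [hset] at hmar
          exact hmar
  -- assemble
  have hinj : Function.Injective
      (fun γ : {g : Fin (n + 1) → ↥V // Function.Injective g ∧ g 0 = v} =>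
        (⟨γ.1, γ.2.2⟩ : {g : Fin (n + 1) → ↥V // g 0 = v})) := by
    rintro ⟨g, hg⟩ ⟨g', hg'⟩ h
    simpa [Subtype.ext_iff] using h
  refine le_trans (ENNReal.tsum_le_tsum hA)
    (le_trans ?_ (le_mul_of_one_le_left zero_le hc1'))
  refine le_trans ?_ (aux_path_sum f _ hB v n)
  exact ENNReal.tsum_comp_le_tsum_of_injective hinj
    (fun g => ∏ i : Fin n, f (g.1 i.castSucc) (g.1 i.succ))
end

section
/- Let G be a simple graph on a vertex set V, and let γ = v₀, v₁, …, v_n (with n ≥ 1 and v₀ = v) be a walk in the 2-step graph G⁺ (i.e., consecutive vertices are adjacent in G⁺). Then there exists a sequence γ' = w₀, w₁, …, w_l with w₀ = v and w_l = v_n such that: γ' is a self-avoiding walk (path) in G⁺; γ' belongs to SAW*_G(v), i.e., γ' is a remnant of some self-avoiding walk in G starting at v; and the vertex sequence w₀, …, w_l is a subsequence of v₀, v₁, …, v_n (there exist indices 0 = k₀ < k₁ < ⋯ < k_l = n with w_j = v_{k_j} for all j). -/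
/-- The 2-step graph `G⁺` of a simple graph `G`: distinct vertices are adjacent iff they are
adjacent in `G` or have a common `G`-neighbour. -/
def twoStep {V : Type*} (G : SimpleGraph V) : SimpleGraph V where
  Adj u w := u ≠ w ∧ (G.Adj u w ∨ ∃ z, G.Adj u z ∧ G.Adj z w)
  symm := ⟨by
    rintro u w ⟨hne, h⟩
    refine ⟨hne.symm, ?_⟩
    rcases h with h | ⟨z, h1, h2⟩
    · exact Or.inl h.symm
    · exact Or.inr ⟨z, h2.symm, h1.symm⟩⟩
  loopless := ⟨fun u h => h.1 rfl⟩

/-- `IsRemnant G γ γ'` says that the walk `γ'` in `G` is obtained from the vertex sequence `γ`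
(whose consecutive vertices are adjacent in `G⁺`) by inserting, between each consecutive pair
not adjacent in `G`, a single common `G`-neighbour, and leaving `G`-adjacent pairs unaltered. -/
inductive IsRemnant {V : Type*} (G : SimpleGraph V) : List V → List V → Prop
  | nil : IsRemnant G [] []
  | single (v : V) : IsRemnant G [v] [v]
  | adj {u w : V} {l l' : List V} (h : G.Adj u w)
      (hrest : IsRemnant G (w :: l) (w :: l')) :
      IsRemnant G (u :: w :: l) (u :: w :: l')
  | ins {u w z : V} {l l' : List V} (hnadj : ¬ G.Adj u w) (h1 : G.Adj u z) (h2 : G.Adj z w)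
      (hrest : IsRemnant G (w :: l) (w :: l')) :
      IsRemnant G (u :: w :: l) (u :: z :: w :: l')

namespace IsRemnant

variable {V : Type*} {G : SimpleGraph V}

/-- L1: the remnant sequence is a sublist of the walk. -/
theorem sublist {c d : List V} (h : IsRemnant G c d) : c.Sublist d := by
  induction h with
  | nil => exact List.Sublist.refl _
  | single v => exact List.Sublist.refl _
  | adj h hrest ih => exact ih.cons₂ _
  | ins hn h1 h2 hrest ih => exact (ih.trans (List.sublist_cons_self _ _)).cons₂ _

/-- L4: appending a `G`-adjacent vertex. -/
theorem append_adj {c d : List V} (h : IsRemnant G c d) {u x : V}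
    (hlast : c.getLast? = some u) (hadj : G.Adj u x) :
    IsRemnant G (c ++ [x]) (d ++ [x]) := by
  induction h with
  | nil => simp at hlast
  | single v =>
    simp at hlast
    subst hlast
    exact .adj hadj (.single x)
  | @adj a w l l' hG hrest ih =>
    have := ih (by simpa using hlast)
    simpa using IsRemnant.adj hG (by simpa using this)
  | @ins a w z l l' hn h1 h2 hrest ih =>
    have := ih (by simpa using hlast)
    simpa using IsRemnant.ins hn h1 h2 (by simpa using this)

/-- L5: appending via an inserted common neighbour. -/
theorem append_ins {c d : List V} (h : IsRemnant G c d) {u z x : V}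
    (hlast : c.getLast? = some u) (hnadj : ¬ G.Adj u x) (h1 : G.Adj u z) (h2 : G.Adj z x) :
    IsRemnant G (c ++ [x]) (d ++ [z, x]) := by
  induction h with
  | nil => simp at hlast
  | single v =>
    simp at hlast
    subst hlast
    exact .ins hnadj h1 h2 (.single x)
  | @adj a w l l' hG hrest ih =>
    have := ih (by simpa using hlast)
    simpa using IsRemnant.adj hG (by simpa using this)
  | @ins a w zz l l' hn ha hb hrest ih =>
    have := ih (by simpa using hlast)
    simpa using IsRemnant.ins hn ha hb (by simpa using this)

/-- L6: truncation at a vertex of the remnant sequence. -/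
theorem truncate_mem {c d : List V} (h : IsRemnant G c d) {x : V} (hx : x ∈ c) :
    ∃ c' crest d' drest, c = c' ++ crest ∧ d = d' ++ drest ∧
      c'.getLast? = some x ∧ d'.getLast? = some x ∧ IsRemnant G c' d' := by
  induction h with
  | nil => simp at hx
  | single v =>
    simp at hx; subst hx
    exact ⟨[x], [], [x], [], by simp, by simp, by simp, by simp, .single x⟩
  | @adj a w l l' hG hrest ih =>
    rcases List.mem_cons.mp hx with rfl | hx
    · exact ⟨[x], w :: l, [x], w :: l', by simp, by simp, by simp, by simp, .single x⟩
    · obtain ⟨c', crest, d', drest, hc, hd, hcl, hdl, hrem⟩ := ih hx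
      obtain ⟨t, rfl⟩ : ∃ t, c' = w :: t := by
        cases c' with
        | nil => simp at hcl
        | cons b t =>
          have hb : w = b := by simpa using congrArg List.head? hc
          exact ⟨t, by rw [hb]⟩
      obtain ⟨t', rfl⟩ : ∃ t', d' = w :: t' := by
        cases d' with
        | nil => simp at hdl
        | cons b t' =>
          have hb : w = b := by simpa using congrArg List.head? hd
          exact ⟨t', by rw [hb]⟩
      refine ⟨a :: w :: t, crest, a :: w :: t', drest, ?_, ?_, ?_, ?_, .adj hG hrem⟩
      · simpa using congrArg (a :: ·) hc
      · simpa using congrArg (a :: ·) hd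
      · simpa using hcl
      · simpa using hdl
  | @ins a w z l l' hn h1 h2 hrest ih =>
    rcases List.mem_cons.mp hx with rfl | hx
    · exact ⟨[x], w :: l, [x], z :: w :: l', by simp, by simp, by simp, by simp, .single x⟩
    · obtain ⟨c', crest, d', drest, hc, hd, hcl, hdl, hrem⟩ := ih hx
      obtain ⟨t, rfl⟩ : ∃ t, c' = w :: t := by
        cases c' with
        | nil => simp at hcl
        | cons b t =>
          have hb : w = b := by simpa using congrArg List.head? hc
          exact ⟨t, by rw [hb]⟩
      obtain ⟨t', rfl⟩ : ∃ t', d' = w :: t' := by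
        cases d' with
        | nil => simp at hdl
        | cons b t' =>
          have hb : w = b := by simpa using congrArg List.head? hd
          exact ⟨t', by rw [hb]⟩
      refine ⟨a :: w :: t, crest, a :: z :: w :: t', drest, ?_, ?_, ?_, ?_, .ins hn h1 h2 hrem⟩
      · simpa using congrArg (a :: ·) hc
      · simpa using congrArg (a :: z :: ·) hd
      · simpa using hcl
      · simpa using hdl

/-- L7: truncation just before an inserted vertex. -/
theorem truncate_inserted {c d : List V} (h : IsRemnant G c d) {x : V}
    (hx : x ∈ d) (hxc : x ∉ c) :
    ∃ u c' crest d' drest, c = c' ++ crest ∧ d = d' ++ (x :: drest) ∧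
      c'.getLast? = some u ∧ d'.getLast? = some u ∧ G.Adj u x ∧ IsRemnant G c' d' := by
  induction h with
  | nil => simp at hx
  | single v => simp at hx; subst hx; simp at hxc
  | @adj a w l l' hG hrest ih =>
    have hxa : x ≠ a := fun h => hxc (h ▸ List.mem_cons_self)
    have hx' : x ∈ w :: l' := by
      rcases List.mem_cons.mp hx with h | h
      · exact absurd h hxa
      · exact h
    have hxc' : x ∉ w :: l := fun h => hxc (List.mem_cons_of_mem _ h)
    obtain ⟨u, c', crest, d', drest, hc, hd, hcl, hdl, hux, hrem⟩ := ih hx' hxc'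
    obtain ⟨t, rfl⟩ : ∃ t, c' = w :: t := by
      cases c' with
      | nil => simp at hcl
      | cons b t =>
        have hb : w = b := by simpa using congrArg List.head? hc
        exact ⟨t, by rw [hb]⟩
    obtain ⟨t', rfl⟩ : ∃ t', d' = w :: t' := by
      cases d' with
      | nil => simp at hdl
      | cons b t' =>
        have hb : w = b := by simpa using congrArg List.head? hd
        exact ⟨t', by rw [hb]⟩
    refine ⟨u, a :: w :: t, crest, a :: w :: t', drest, ?_, ?_, ?_, ?_, hux, .adj hG hrem⟩
    · simpa using congrArg (a :: ·) hc
    · simpa using congrArg (a :: ·) hd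
    · simpa using hcl
    · simpa using hdl
  | @ins a w z l l' hn h1 h2 hrest ih =>
    have hxa : x ≠ a := fun h => hxc (h ▸ List.mem_cons_self)
    by_cases hxz : x = z
    · subst hxz
      exact ⟨a, [a], w :: l, [a], w :: l', by simp, by simp, by simp, by simp, h1, .single a⟩
    · have hx' : x ∈ w :: l' := by
        rcases List.mem_cons.mp hx with h | h
        · exact absurd h hxa
        · rcases List.mem_cons.mp h with h | h
          · exact absurd h hxz
          · exact h
      have hxc' : x ∉ w :: l := fun h => hxc (List.mem_cons_of_mem _ h)
      obtain ⟨u, c', crest, d', drest, hc, hd, hcl, hdl, hux, hrem⟩ := ih hx' hxc'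
      obtain ⟨t, rfl⟩ : ∃ t, c' = w :: t := by
        cases c' with
        | nil => simp at hcl
        | cons b t =>
          have hb : w = b := by simpa using congrArg List.head? hc
          exact ⟨t, by rw [hb]⟩
      obtain ⟨t', rfl⟩ : ∃ t', d' = w :: t' := by
        cases d' with
        | nil => simp at hdl
        | cons b t' =>
          have hb : w = b := by simpa using congrArg List.head? hd
          exact ⟨t', by rw [hb]⟩
      refine ⟨u, a :: w :: t, crest, a :: z :: w :: t', drest, ?_, ?_, ?_, ?_, hux,
        .ins hn h1 h2 hrem⟩
      · simpa using congrArg (a :: ·) hc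
      · simpa using congrArg (a :: z :: ·) hd
      · simpa using hcl
      · simpa using hdl

/-- the remnant sequence and the walk have the same last entry. -/
theorem getLast?_eq {c d : List V} (h : IsRemnant G c d) : c.getLast? = d.getLast? := by
  induction h with
  | nil => rfl
  | single v => rfl
  | adj h hrest ih => simpa using ih
  | ins hn h1 h2 hrest ih => simpa using ih

end IsRemnant

set_option linter.deprecated false in
theorem List.chain'_append {α : Type*} {R : α → α → Prop} {l₁ l₂ : List α} :
    List.Chain' R (l₁ ++ l₂) ↔ List.IsChain R l₁ ∧ List.IsChain R l₂ ∧
      ∀ x ∈ l₁.getLast?, ∀ y ∈ l₂.head?, R x y :=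
  List.isChain_append

theorem aux_saw {V : Type*} (G : SimpleGraph V) (γ : List V)
    (hwalk : γ.Chain' (twoStep G).Adj) (v : V) (hhead : γ.head? = some v) :
    ∃ γ'' δ : List V, γ''.Sublist γ ∧ γ''.head? = some v ∧ γ''.getLast? = γ.getLast? ∧
      γ''.Chain' (twoStep G).Adj ∧ γ''.Nodup ∧
      δ.Chain' G.Adj ∧ δ.Nodup ∧ δ.head? = some v ∧ IsRemnant G γ'' δ := by
  induction γ using List.reverseRecOn with
  | nil => simp at hhead
  | append_singleton ys x ih =>
    rcases eq_or_ne ys [] with rfl | hys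
    · exact ⟨[x], [x], by simp, by simpa using hhead, by simp, List.isChain_singleton x, by simp, List.isChain_singleton x,
        by simp, by simpa using hhead, .single x⟩
    · rw [List.chain'_append] at hwalk
      obtain ⟨hc1, -, hadj⟩ := hwalk
      have hhead' : ys.head? = some v := by
        rwa [List.head?_append_of_ne_nil _ hys] at hhead
      obtain ⟨c, d, hsub, hch, hclast, hcchain, hcnodup, hdchain, hdnodup, hdhead, hrem⟩ :=
        ih hc1 hhead'
      set u := ys.getLast hys with hu
      have hlast_ys : ys.getLast? = some u := List.getLast?_eq_getLast hys
      have hclast' : c.getLast? = some u := hclast.trans hlast_ys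
      have hcne : c ≠ [] := by rintro rfl; simp at hclast'
      have hadj_ux : (twoStep G).Adj u x := hadj u hlast_ys x (by simp)
      have hglast : (ys ++ [x]).getLast? = some x := by simp [List.getLast?_concat]
      have hcsub : c.Sublist (ys ++ [x]) := hsub.trans (List.sublist_append_left _ _)
      have hmemd : ∀ a ∈ c, a ∈ d := fun a ha => hrem.sublist.subset ha
      -- head? of a nonempty prefix of c is v; similarly for d
      have headpre : ∀ (c' crest : List V), c = c' ++ crest → c' ≠ [] → c'.head? = some v := by
        intro c' crest hcc hne
        rw [hcc, List.head?_append_of_ne_nil _ hne] at hch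
        exact hch
      have headpred : ∀ (d' drest : List V), d = d' ++ drest → d' ≠ [] → d'.head? = some v := by
        intro d' drest hdd hne
        rw [hdd, List.head?_append_of_ne_nil _ hne] at hdhead
        exact hdhead
      by_cases hxc : x ∈ c
      · -- Case 1: x already occurs in the remnant sequence; truncate.
        obtain ⟨c', crest, d', drest, hcc, hdd, hcl, hdl, hrem'⟩ := hrem.truncate_mem hxc
        have hc'ne : c' ≠ [] := by rintro rfl; simp at hcl
        have hd'ne : d' ≠ [] := by rintro rfl; simp at hdl
        refine ⟨c', d', ?_, headpre c' crest hcc hc'ne, by rw [hcl, hglast], ?_, ?_, ?_, ?_,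
          headpred d' drest hdd hd'ne, hrem'⟩
        · exact ((List.sublist_append_left c' crest).trans (hcc ▸ hsub)).trans
            (List.sublist_append_left _ _)
        · exact (List.chain'_append.mp (hcc ▸ hcchain)).1
        · exact ((List.sublist_append_left c' crest).nodup (hcc ▸ hcnodup))
        · exact (List.chain'_append.mp (hdd ▸ hdchain)).1
        · exact ((List.sublist_append_left d' drest).nodup (hdd ▸ hdnodup))
      · by_cases hxd : x ∈ d
        · -- Case 2: x is an inserted vertex of δ; truncate there and append x.
          obtain ⟨u', c', crest, d', drest, hcc, hdd, hcl, hdl, hux, hrem'⟩ :=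
            hrem.truncate_inserted hxd hxc
          have hc'ne : c' ≠ [] := by rintro rfl; simp at hcl
          have hd'ne : d' ≠ [] := by rintro rfl; simp at hdl
          have hxnc' : x ∉ c' := fun h => hxc (hcc ▸ List.mem_append_left _ h)
          have hxnd' : x ∉ d' := by
            intro h
            have := hdd ▸ hdnodup
            exact (List.disjoint_of_nodup_append this) h (by simp)
          refine ⟨c' ++ [x], d' ++ [x], ?_, ?_, by simp [hglast], ?_, ?_, ?_, ?_, ?_,
            hrem'.append_adj hcl hux⟩
          · exact ((List.sublist_append_left c' crest).trans (hcc ▸ hsub)).append_right _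
          · rw [List.head?_append_of_ne_nil _ hc'ne]; exact headpre c' crest hcc hc'ne
          · rw [List.chain'_append]
            refine ⟨(List.chain'_append.mp (hcc ▸ hcchain)).1, by simp, ?_⟩
            intro a ha b hb
            rw [hcl] at ha; simp at ha hb; subst ha; subst hb
            exact ⟨hux.ne, Or.inl hux⟩
          · rw [List.nodup_append]
            exact ⟨(List.sublist_append_left c' crest).nodup (hcc ▸ hcnodup), by simp,
              by simp; exact fun a ha h => hxnc' (h ▸ ha)⟩
          · rw [List.chain'_append]
            refine ⟨(List.chain'_append.mp (hdd ▸ hdchain)).1, by simp, ?_⟩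
            intro a ha b hb
            rw [hdl] at ha; simp at ha hb; subst ha; subst hb
            exact hux
          · rw [List.nodup_append]
            exact ⟨(List.sublist_append_left d' (x :: drest)).nodup (hdd ▸ hdnodup), by simp,
              by simp; exact fun a ha h => hxnd' (h ▸ ha)⟩
          · rw [List.head?_append_of_ne_nil _ hd'ne]; exact headpred d' (x :: drest) hdd hd'ne
        · -- Case 3: x is fresh.
          by_cases hGux : G.Adj u x
          · -- 3a: G.Adj u x, append directly
            refine ⟨c ++ [x], d ++ [x], hsub.append_right _, ?_, by simp [hglast], ?_, ?_, ?_, ?_,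
              ?_, hrem.append_adj hclast' hGux⟩
            · rw [List.head?_append_of_ne_nil _ hcne]; exact hch
            · rw [List.chain'_append]
              refine ⟨hcchain, by simp, ?_⟩
              intro a ha b hb
              rw [hclast'] at ha; simp at ha hb; subst ha; subst hb
              exact hadj_ux
            · rw [List.nodup_append]
              exact ⟨hcnodup, by simp, by simp; exact fun a ha h => hxc (h ▸ ha)⟩
            · rw [List.chain'_append]
              refine ⟨hdchain, by simp, ?_⟩
              intro a ha b hb
              have hdl' : d.getLast? = some u := hrem.getLast?_eq ▸ hclast'
              rw [hdl'] at ha; simp at ha hb; subst ha; subst hb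
              exact hGux
            · rw [List.nodup_append]
              exact ⟨hdnodup, by simp, by simp; exact fun a ha h => hxd (h ▸ ha)⟩
            · have hdne : d ≠ [] := by
                rintro rfl; rw [hrem.getLast?_eq] at hclast'; simp at hclast'
              rw [List.head?_append_of_ne_nil _ hdne]; exact hdhead
          · -- 3b: common neighbour z
            obtain ⟨z, hz1, hz2⟩ : ∃ z, G.Adj u z ∧ G.Adj z x := hadj_ux.2.resolve_left hGux
            have hdlast : d.getLast? = some u := hrem.getLast?_eq ▸ hclast'
            have hdne : d ≠ [] := by rintro rfl; simp at hdlast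
            by_cases hzc : z ∈ c
            · -- 3b-ii: z occurs in the remnant sequence; truncate at z, append x
              obtain ⟨c', crest, d', drest, hcc, hdd, hcl, hdl, hrem'⟩ := hrem.truncate_mem hzc
              have hc'ne : c' ≠ [] := by rintro rfl; simp at hcl
              have hd'ne : d' ≠ [] := by rintro rfl; simp at hdl
              have hxnc' : x ∉ c' := fun h => hxc (hcc ▸ List.mem_append_left _ h)
              have hxnd' : x ∉ d' := fun h => hxd (hdd ▸ List.mem_append_left _ h)
              refine ⟨c' ++ [x], d' ++ [x], ?_, ?_, by simp [hglast], ?_, ?_, ?_, ?_, ?_,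
                hrem'.append_adj hcl hz2⟩
              · exact ((List.sublist_append_left c' crest).trans (hcc ▸ hsub)).append_right _
              · rw [List.head?_append_of_ne_nil _ hc'ne]; exact headpre c' crest hcc hc'ne
              · rw [List.chain'_append]
                refine ⟨(List.chain'_append.mp (hcc ▸ hcchain)).1, by simp, ?_⟩
                intro a ha b hb
                rw [hcl] at ha; simp at ha hb; subst ha; subst hb
                exact ⟨hz2.ne, Or.inl hz2⟩
              · rw [List.nodup_append]
                exact ⟨(List.sublist_append_left c' crest).nodup (hcc ▸ hcnodup), by simp,
                  by simp; exact fun a ha h => hxnc' (h ▸ ha)⟩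
              · rw [List.chain'_append]
                refine ⟨(List.chain'_append.mp (hdd ▸ hdchain)).1, by simp, ?_⟩
                intro a ha b hb
                rw [hdl] at ha; simp at ha hb; subst ha; subst hb
                exact hz2
              · rw [List.nodup_append]
                exact ⟨(List.sublist_append_left d' drest).nodup (hdd ▸ hdnodup), by simp,
                  by simp; exact fun a ha h => hxnd' (h ▸ ha)⟩
              · rw [List.head?_append_of_ne_nil _ hd'ne]; exact headpred d' drest hdd hd'ne
            · by_cases hzd : z ∈ d
              · -- 3b-iii: z is an inserted vertex; truncate just before z
                obtain ⟨u', c', crest, d', drest, hcc, hdd, hcl, hdl, huz, hrem'⟩ :=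
                  hrem.truncate_inserted hzd hzc
                have hc'ne : c' ≠ [] := by rintro rfl; simp at hcl
                have hd'ne : d' ≠ [] := by rintro rfl; simp at hdl
                have hxnc' : x ∉ c' := fun h => hxc (hcc ▸ List.mem_append_left _ h)
                have hxnd' : x ∉ d' := fun h => hxd (hdd ▸ List.mem_append_left _ h)
                have hznd' : z ∉ d' := by
                  intro h
                  exact (List.disjoint_of_nodup_append (hdd ▸ hdnodup)) h (by simp)
                have hu'x : u' ≠ x := by
                  intro h
                  exact hxd (hdd ▸ List.mem_append_left _ (h ▸ List.mem_of_mem_getLast? hdl))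
                have hsubc' : (c' ++ [x]).Sublist (ys ++ [x]) :=
                  ((List.sublist_append_left c' crest).trans (hcc ▸ hsub)).append_right _
                have hheadc' : (c' ++ [x]).head? = some v := by
                  rw [List.head?_append_of_ne_nil _ hc'ne]; exact headpre c' crest hcc hc'ne
                have hchainc' : (c' ++ [x]).Chain' (twoStep G).Adj := by
                  rw [List.chain'_append]
                  refine ⟨(List.chain'_append.mp (hcc ▸ hcchain)).1, by simp, ?_⟩
                  intro a ha b hb
                  rw [hcl] at ha; simp at ha hb; subst ha; subst hb
                  exact ⟨hu'x, Or.inr ⟨z, huz, hz2⟩⟩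
                have hnodupc' : (c' ++ [x]).Nodup := by
                  rw [List.nodup_append]
                  exact ⟨(List.sublist_append_left c' crest).nodup (hcc ▸ hcnodup), by simp,
                    by simp; exact fun a ha h => hxnc' (h ▸ ha)⟩
                by_cases hu'adj : G.Adj u' x
                · refine ⟨c' ++ [x], d' ++ [x], hsubc', hheadc', by simp [hglast], hchainc',
                    hnodupc', ?_, ?_, ?_, hrem'.append_adj hcl hu'adj⟩
                  · rw [List.chain'_append]
                    refine ⟨(List.chain'_append.mp (hdd ▸ hdchain)).1, by simp, ?_⟩
                    intro a ha b hb
                    rw [hdl] at ha; simp at ha hb; subst ha; subst hb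
                    exact hu'adj
                  · rw [List.nodup_append]
                    exact ⟨(List.sublist_append_left d' (z :: drest)).nodup (hdd ▸ hdnodup),
                      by simp, by simp; exact fun a ha h => hxnd' (h ▸ ha)⟩
                  · rw [List.head?_append_of_ne_nil _ hd'ne]
                    exact headpred d' (z :: drest) hdd hd'ne
                · refine ⟨c' ++ [x], d' ++ [z, x], hsubc', hheadc', by simp [hglast], hchainc',
                    hnodupc', ?_, ?_, ?_, hrem'.append_ins hcl hu'adj huz hz2⟩
                  · rw [List.chain'_append]
                    refine ⟨(List.chain'_append.mp (hdd ▸ hdchain)).1, by simp [hz2], ?_⟩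
                    intro a ha b hb
                    rw [hdl] at ha; simp at ha hb; subst ha; subst hb
                    exact huz
                  · rw [List.nodup_append]
                    refine ⟨(List.sublist_append_left d' (z :: drest)).nodup (hdd ▸ hdnodup),
                      by simp [hz2.ne], ?_⟩
                    intro a ha b hb hab; subst hab
                    simp at hb
                    rcases hb with rfl | rfl
                    · exact hznd' ha
                    · exact hxnd' ha
                  · rw [List.head?_append_of_ne_nil _ hd'ne]
                    exact headpred d' (z :: drest) hdd hd'ne
              · -- 3b-i: z is fresh; append z and x to δ
                refine ⟨c ++ [x], d ++ [z, x], hsub.append_right _, ?_, by simp [hglast], ?_, ?_,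
                  ?_, ?_, ?_, hrem.append_ins hclast' hGux hz1 hz2⟩
                · rw [List.head?_append_of_ne_nil _ hcne]; exact hch
                · rw [List.chain'_append]
                  refine ⟨hcchain, by simp, ?_⟩
                  intro a ha b hb
                  rw [hclast'] at ha; simp at ha hb; subst ha; subst hb
                  exact hadj_ux
                · rw [List.nodup_append]
                  exact ⟨hcnodup, by simp, by simp; exact fun a ha h => hxc (h ▸ ha)⟩
                · rw [List.chain'_append]
                  refine ⟨hdchain, by simp [hz2], ?_⟩
                  intro a ha b hb
                  rw [hdlast] at ha; simp at ha hb; subst ha; subst hb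
                  exact hz1
                · rw [List.nodup_append]
                  refine ⟨hdnodup, by simp [hz2.ne], ?_⟩
                  intro a ha b hb hab; subst hab
                  simp at hb
                  rcases hb with rfl | rfl
                  · exact hzd ha
                  · exact hxd ha
                · rw [List.head?_append_of_ne_nil _ hdne]; exact hdhead

theorem stmt9 {V : Type*} (G : SimpleGraph V) (v : V) (γ : List V)
    (hlen : 2 ≤ γ.length) (hhead : γ.head? = some v)
    (hwalk : γ.Chain' (twoStep G).Adj) :
    ∃ γ'' : List V,
      -- γ'' is a subsequence of γ with the same first and last vertices
      γ''.Sublist γ ∧ γ''.head? = some v ∧ γ''.getLast? = γ.getLast? ∧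
      -- γ'' is a self-avoiding walk in G⁺
      γ''.Chain' (twoStep G).Adj ∧ γ''.Nodup ∧
      -- γ'' is a remnant of a self-avoiding walk in G starting at v
      ∃ δ : List V, δ.Chain' G.Adj ∧ δ.Nodup ∧ δ.head? = some v ∧ IsRemnant G γ'' δ := by
  obtain ⟨γ'', δ, h1, h2, h3, h4, h5, h6, h7, h8, h9⟩ := aux_saw G γ hwalk v hhead
  exact ⟨γ'', h1, h2, h3, h4, h5, δ, h6, h7, h8, h9⟩
end
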